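/- arXiv:2303.05798 — 2 statements merged into one kernel-verified Lean document; each statement's English description precedes it below -/
import Mathlib

section
/- Let d ≥ 1 and p ≥ 1. For all μ, ν, α ∈ P_p(S_d^{++}(ℝ)): (i) SPDSW_p(μ,ν) is finite; (ii) SPDSW_p(μ,ν) ≥ 0 and SPDSW_p(μ,ν) = SPDSW_p(ν,μ); (iii) SPDSW_p(μ,ν) ≤ SPDSW_p(μ,α) + SPDSW_p(α,ν). -/
open MeasureTheory Matrix Filter
open scoped ENNReal NNReal
open ProbabilityTheory
open scoped RealInnerProductSpace

noncomputable section

/-- Square real matrices. -/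
abbrev Mat (d : ℕ) := Matrix (Fin d) (Fin d) ℝ

instance (d : ℕ) : MeasurableSpace (Mat d) :=
  (inferInstance : MeasurableSpace (Fin d → Fin d → ℝ))

instance (d : ℕ) : BorelSpace (Mat d) :=
  (inferInstance : BorelSpace (Fin d → Fin d → ℝ))

variable {d : ℕ}

/-- Frobenius inner product `⟨A,B⟩_F = Tr(AᵀB)`. -/
def frI (A B : Mat d) : ℝ := (Aᵀ * B).trace

/-- Frobenius norm. -/
def fro (A : Mat d) : ℝ := Real.sqrt (frI A A)

/-- The space of symmetric positive definite matrices, as a subtype. -/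
abbrev SPD (d : ℕ) := {M : Mat d // M.PosDef}

instance (d : ℕ) : Nonempty {A : Mat d // A.IsSymm} := ⟨⟨0, Matrix.isSymm_zero⟩⟩

/-- Matrix exponential. -/
def mexp (A : Mat d) : Mat d := NormedSpace.exp A

/-- The matrix exponential restricted to symmetric matrices. -/
def symExp (d : ℕ) : {A : Mat d // A.IsSymm} → Mat d := fun A => mexp A.1

/-- Matrix logarithm: the inverse of the matrix exponential restricted to
symmetric matrices (`exp : S_d(ℝ) → S_d^{++}(ℝ)` is a bijection, and `mlog`
coincides with its inverse on `S_d^{++}(ℝ)`). -/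
def mlog (M : Mat d) : Mat d := (Function.invFun (symExp d) M).1

/-- Log-Euclidean distance `d_LE(X,Y) = ‖log X - log Y‖_F`. -/
def dLE (X Y : Mat d) : ℝ := fro (mlog X - mlog Y)

/-- Projection coordinate `t^A(M) = Tr(A log M)` on the geodesic generated by `A`. -/
def tA (A : Mat d) (M : SPD d) : ℝ := (A * mlog M.1).trace

/-- A linear map of the matrix space which restricts to a surjective isometry of the
Euclidean space of symmetric matrices with the Frobenius inner product. -/
def IsSymIsometry (f : Mat d →ₗ[ℝ] Mat d) : Prop :=
  (∀ A : Mat d, A.IsSymm → (f A).IsSymm) ∧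
  (∀ A B : Mat d, A.IsSymm → B.IsSymm → frI (f A) (f B) = frI A B) ∧
  (∀ B : Mat d, B.IsSymm → ∃ A : Mat d, A.IsSymm ∧ f A = B)

/-- `λ_S` is the uniform probability distribution on the unit Frobenius sphere
`{A ∈ S_d(ℝ) : ‖A‖_F = 1}`: a Borel probability measure concentrated on this sphere and
invariant under every linear isometry of `(S_d(ℝ), ⟨·,·⟩_F)`; these properties
characterize it uniquely. -/
def IsUniformSymSphere (lamS : Measure (Mat d)) : Prop :=
  IsProbabilityMeasure lamS ∧
  lamS {A : Mat d | A.IsSymm ∧ fro A = 1}ᶜ = 0 ∧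
  ∀ f : Mat d →ₗ[ℝ] Mat d, IsSymIsometry f → lamS.map f = lamS

/-- The set of couplings between `α` and `β`. -/
def couplings {E : Type*} [MeasurableSpace E] (α β : Measure E) : Set (Measure (E × E)) :=
  {γ | γ.map Prod.fst = α ∧ γ.map Prod.snd = β}

/-- `W_p^p`, the `p`-th power of the `p`-Wasserstein distance with ground cost `ρ`. -/
def Wpp {E : Type*} [MeasurableSpace E] (ρ : E → E → ℝ) (p : ℝ) (α β : Measure E) : ℝ≥0∞ :=
  ⨅ γ ∈ couplings α β, ∫⁻ z, ENNReal.ofReal (ρ z.1 z.2) ^ p ∂γ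

/-- `W_p^p` between measures on `ℝ`. -/
def W1dpp (p : ℝ) (α β : Measure ℝ) : ℝ≥0∞ := Wpp (fun x y => |x - y|) p α β

/-- `μ ∈ P_p(S_d^{++}(ℝ))`: a Borel probability measure with finite `p`-th moment for
the Log-Euclidean distance. -/
def MemPp (p : ℝ) (μ : Measure (SPD d)) : Prop :=
  IsProbabilityMeasure μ ∧ ∫⁻ X, ENNReal.ofReal (dLE X.1 1 ^ p) ∂μ < ⊤

/-- `SPDSW_p^p(μ,ν) = ∫ W_p^p(t^A_#μ, t^A_#ν) dλ_S(A)`. -/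
def SPDSWpp (p : ℝ) (lamS : Measure (Mat d)) (μ ν : Measure (SPD d)) : ℝ≥0∞ :=
  ∫⁻ A, W1dpp p (μ.map (tA A)) (ν.map (tA A)) ∂lamS

/-- `SPDSW_p(μ,ν)`. -/
def SPDSW (p : ℝ) (lamS : Measure (Mat d)) (μ ν : Measure (SPD d)) : ℝ≥0∞ :=
  SPDSWpp p lamS μ ν ^ (1 / p)

/-- `W_p^p` on `S_d^{++}(ℝ)` with the Log-Euclidean ground metric. -/
def WLEpp (p : ℝ) (μ ν : Measure (SPD d)) : ℝ≥0∞ :=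
  Wpp (fun X Y => dLE X.1 Y.1) p μ ν

/-- The pushforward `log_#μ` of a measure on `S_d^{++}(ℝ)`. -/
def logPush (μ : Measure (SPD d)) : Measure (Mat d) :=
  μ.map (fun M : SPD d => mlog M.1)


-- ===== Auxiliary lemmas =====

instance : StandardBorelSpace (Mat d) :=
  inferInstanceAs (StandardBorelSpace (Fin d → Fin d → ℝ))

lemma isSelfAdjoint_of_isSymm {A : Mat d} (hA : A.IsSymm) : _root_.IsSelfAdjoint A := by
  rw [_root_.IsSelfAdjoint, Matrix.star_eq_conjTranspose,
    Matrix.conjTranspose_eq_transpose_of_trivial]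
  exact hA

lemma continuous_mexp : Continuous (mexp : Mat d → Mat d) := by
  letI := Matrix.linftyOpNormedRing (n := Fin d) (α := ℝ)
  letI := Matrix.linftyOpNormedAlgebra (n := Fin d) (R := ℝ) (α := ℝ)
  letI := Matrix.linftyOpNormedAlgebra (n := Fin d) (R := ℚ) (α := ℝ)
  exact NormedSpace.exp_continuous

lemma symExp_injective : Function.Injective (symExp d) := by
  rintro ⟨A, hA⟩ ⟨B, hB⟩ h
  simp only [symExp, mexp] at h
  letI := Matrix.instL2OpNormedRing (n := Fin d) (𝕜 := ℝ)
  letI := Matrix.instL2OpNormedAlgebra (n := Fin d) (𝕜 := ℝ)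
  have hA' := isSelfAdjoint_of_isSymm hA
  have hB' := isSelfAdjoint_of_isSymm hB
  have : A = B := by
    rw [← CFC.log_exp A hA', ← CFC.log_exp B hB', h]
  simpa using this

lemma measurableSet_isSymm : MeasurableSet {A : Mat d | A.IsSymm} := by
  have : IsClosed {A : Mat d | A.IsSymm} := by
    have hc : Continuous (fun A : Mat d => Aᵀ) := (continuous_id : Continuous (id : Mat d → Mat d)).matrix_transpose
    exact isClosed_eq hc continuous_id
  exact this.measurableSet

instance : StandardBorelSpace {A : Mat d // A.IsSymm} :=
  measurableSet_isSymm.standardBorel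

lemma measurable_symExp : Measurable (symExp d) :=
  continuous_mexp.measurable.comp measurable_subtype_coe

lemma measurable_invFun_symExp : Measurable (Function.invFun (symExp d)) := by
  have he := measurable_symExp.measurableEmbedding (symExp_injective (d := d))
  have h := he.measurable_extend (measurable_id (α := {A : Mat d // A.IsSymm}))
    (measurable_const (a := Classical.arbitrary {A : Mat d // A.IsSymm}))
  convert h using 1
  funext x
  simp only [Function.invFun, Function.extend]
  split_ifs <;> rfl

lemma measurable_mlog : Measurable (mlog : Mat d → Mat d) :=
  measurable_subtype_coe.comp measurable_invFun_symExp


def emb (A : Mat d) : EuclideanSpace ℝ (Fin d × Fin d) :=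
  (WithLp.equiv 2 _).symm (fun p => A p.1 p.2)

lemma emb_add (A B : Mat d) : emb (A + B) = emb A + emb B := by
  ext p; simp [emb]

lemma emb_sub (A B : Mat d) : emb (A - B) = emb A - emb B := by
  ext p; simp [emb]

lemma frI_eq_inner (A B : Mat d) : frI A B = ⟪emb A, emb B⟫ := by
  simp only [frI, Matrix.trace, Matrix.diag, Matrix.mul_apply, Matrix.transpose_apply,
    PiLp.inner_apply, RCLike.inner_apply, conj_trivial, emb, WithLp.equiv_symm_apply, PiLp.toLp_apply, mul_comm]
  rw [Fintype.sum_prod_type]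
  exact Finset.sum_comm

lemma fro_eq_norm (A : Mat d) : fro A = ‖emb A‖ := by
  rw [fro, frI_eq_inner, real_inner_self_eq_norm_mul_norm, Real.sqrt_mul_self (norm_nonneg _)]

lemma fro_nonneg (A : Mat d) : 0 ≤ fro A := by rw [fro_eq_norm]; exact norm_nonneg _

lemma fro_sub_triangle (A B C : Mat d) : fro (A - C) ≤ fro (A - B) + fro (B - C) := by
  rw [fro_eq_norm, fro_eq_norm, fro_eq_norm, emb_sub, emb_sub, emb_sub]
  exact norm_sub_le_norm_sub_add_norm_sub _ _ _

lemma fro_sub_comm (A B : Mat d) : fro (A - B) = fro (B - A) := by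
  rw [fro_eq_norm, fro_eq_norm, emb_sub, emb_sub]
  exact norm_sub_rev _ _

lemma abs_frI_le (A B : Mat d) : |frI A B| ≤ fro A * fro B := by
  rw [frI_eq_inner, fro_eq_norm, fro_eq_norm]
  exact abs_real_inner_le_norm _ _

lemma frI_transpose (A B : Mat d) : frI Aᵀ B = (A * B).trace := by
  simp only [frI, Matrix.trace, Matrix.diag, Matrix.mul_apply, Matrix.transpose_apply]

lemma fro_transpose (A : Mat d) : fro Aᵀ = fro A := by
  unfold fro frI
  congr 1
  simp only [Matrix.trace, Matrix.diag, Matrix.mul_apply, Matrix.transpose_apply,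
    Matrix.transpose_transpose]
  rw [Finset.sum_comm]

lemma abs_trace_mul_le (A M : Mat d) : |(A * M).trace| ≤ fro A * fro M := by
  rw [← frI_transpose, ← fro_transpose A]
  exact abs_frI_le _ _


lemma frI_eq_sum (A B : Mat d) : frI A B = ∑ p : Fin d × Fin d, A p.1 p.2 * B p.1 p.2 := by
  rw [frI_eq_inner]
  simp only [PiLp.inner_apply, RCLike.inner_apply, conj_trivial, emb, WithLp.equiv_symm_apply,
    PiLp.toLp_apply, mul_comm]

lemma continuous_fro : Continuous (fro : Mat d → ℝ) := by
  have h : Continuous fun A : Mat d => frI A A := by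
    simp only [frI_eq_sum]
    apply continuous_finset_sum
    intro p _
    have : Continuous fun A : Mat d => A p.1 p.2 :=
      (continuous_apply p.2).comp (continuous_apply p.1)
    exact this.mul this
  exact Real.continuous_sqrt.comp h

@[simp] lemma fro_zero : fro (0 : Mat d) = 0 := by
  simp [fro, frI]

lemma tendsto_fro_sub (B : Mat d) :
    Filter.Tendsto (fun A : Mat d => fro (A - B)) (nhds B) (nhds 0) := by
  have h : Continuous fun A : Mat d => fro (A - B) :=
    continuous_fro.comp (continuous_id.sub continuous_const)
  have := h.tendsto B
  simpa using this


def wcost (p : ℝ) (γ : Measure (ℝ × ℝ)) : ℝ≥0∞ := ∫⁻ z, ENNReal.ofReal |z.1 - z.2| ^ p ∂γ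

lemma W1dpp_eq (p : ℝ) (α β : Measure ℝ) : W1dpp p α β = ⨅ γ ∈ couplings α β, wcost p γ := rfl

lemma measurable_wcost_integrand (p : ℝ) :
    Measurable (fun z : ℝ × ℝ => ENNReal.ofReal |z.1 - z.2| ^ p) := by
  exact ENNReal.continuous_rpow_const.measurable.comp
    ((measurable_fst.sub measurable_snd).abs.ennreal_ofReal)

lemma rpow_iInf {ι : Sort*} (f : ι → ℝ≥0∞) {c : ℝ} (hc : 0 < c) :
    (⨅ i, f i) ^ c = ⨅ i, f i ^ c := by
  apply le_antisymm
  · exact le_iInf fun i => ENNReal.rpow_le_rpow (iInf_le f i) hc.le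
  · have h : ∀ i, (⨅ j, f j ^ c) ^ (1 / c) ≤ f i := by
      intro i
      calc (⨅ j, f j ^ c) ^ (1 / c) ≤ (f i ^ c) ^ (1/c) :=
            ENNReal.rpow_le_rpow (iInf_le _ i) (by positivity)
        _ = f i := by
            rw [← ENNReal.rpow_mul, mul_one_div_cancel hc.ne', ENNReal.rpow_one]
    have h2 : (⨅ j, f j ^ c) ^ (1 / c) ≤ ⨅ i, f i := le_iInf h
    calc ⨅ j, f j ^ c = ((⨅ j, f j ^ c) ^ (1/c)) ^ c := by
          rw [← ENNReal.rpow_mul, one_div_mul_cancel hc.ne', ENNReal.rpow_one]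
      _ ≤ (⨅ i, f i) ^ c := ENNReal.rpow_le_rpow h2 hc.le

lemma prob_of_coupling {α : Measure ℝ} [IsProbabilityMeasure α] {γ : Measure (ℝ × ℝ)}
    (h : γ.map Prod.fst = α) : IsProbabilityMeasure γ := by
  constructor
  have : γ.map Prod.fst Set.univ = 1 := by rw [h]; exact measure_univ
  rwa [Measure.map_apply measurable_fst MeasurableSet.univ, Set.preimage_univ] at this

lemma W1dpp_le_wcost {p : ℝ} {α β : Measure ℝ} {γ : Measure (ℝ × ℝ)}
    (h : γ ∈ couplings α β) : W1dpp p α β ≤ wcost p γ := by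
  rw [W1dpp_eq]; exact iInf₂_le γ h

lemma swap_mem_couplings {α β : Measure ℝ} {γ : Measure (ℝ × ℝ)} (h : γ ∈ couplings α β) :
    γ.map Prod.swap ∈ couplings β α := by
  obtain ⟨h1, h2⟩ := h
  constructor
  · rw [Measure.map_map measurable_fst measurable_swap]
    exact h2
  · rw [Measure.map_map measurable_snd measurable_swap]
    exact h1

lemma wcost_map_swap (p : ℝ) (γ : Measure (ℝ × ℝ)) : wcost p (γ.map Prod.swap) = wcost p γ := by
  rw [wcost, lintegral_map (measurable_wcost_integrand p) measurable_swap]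
  unfold wcost
  congr 1
  funext z
  rw [Prod.fst_swap, Prod.snd_swap, abs_sub_comm]

lemma W1dpp_symm (p : ℝ) (α β : Measure ℝ) : W1dpp p α β = W1dpp p β α := by
  have aux : ∀ α' β' : Measure ℝ, W1dpp p β' α' ≤ W1dpp p α' β' := by
    intro α' β'
    rw [W1dpp_eq p α' β']
    apply le_iInf₂
    intro γ hγ
    exact (W1dpp_le_wcost (swap_mem_couplings hγ)).trans_eq (wcost_map_swap p γ)
  exact le_antisymm (aux β α) (aux α β)

lemma prod_mem_couplings (α β : Measure ℝ) [IsProbabilityMeasure α] [IsProbabilityMeasure β] :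
    α.prod β ∈ couplings α β := by
  constructor
  · rw [← Measure.fst, Measure.fst_prod]
  · rw [← Measure.snd, Measure.snd_prod]

lemma W1dpp_le_prod (p : ℝ) (α β : Measure ℝ) [IsProbabilityMeasure α] [IsProbabilityMeasure β] :
    W1dpp p α β ≤ ∫⁻ x, ∫⁻ y, ENNReal.ofReal |x - y| ^ p ∂β ∂α := by
  refine (W1dpp_le_wcost (prod_mem_couplings α β)).trans_eq ?_
  exact lintegral_prod _ (measurable_wcost_integrand p).aemeasurable

lemma W1dpp_le_map_pair {p : ℝ} {X : Type*} [MeasurableSpace X] (μ : Measure X)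
    {t1 t2 : X → ℝ} (h1 : Measurable t1) (h2 : Measurable t2) :
    W1dpp p (μ.map t1) (μ.map t2) ≤ ∫⁻ x, ENNReal.ofReal |t1 x - t2 x| ^ p ∂μ := by
  have hmem : μ.map (fun x => (t1 x, t2 x)) ∈ couplings (μ.map t1) (μ.map t2) := by
    constructor
    · rw [Measure.map_map measurable_fst (h1.prodMk h2)]; rfl
    · rw [Measure.map_map measurable_snd (h1.prodMk h2)]; rfl
  refine (W1dpp_le_wcost hmem).trans_eq ?_
  rw [wcost, lintegral_map (measurable_wcost_integrand p) (h1.prodMk h2)]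

section Glue

variable {β : Measure ℝ} [IsProbabilityMeasure β]
  (κ lam : Kernel ℝ ℝ) [IsMarkovKernel κ] [IsMarkovKernel lam]

lemma theta_marg_fst (s : Set ℝ) (hs : MeasurableSet s) :
    (β ⊗ₘ (κ ×ₖ lam)).map (fun q => q.2.1) s = (β ⊗ₘ κ).map Prod.snd s := by
  have hm : Measurable fun q : ℝ × ℝ × ℝ => q.2.1 := measurable_snd.fst
  rw [Measure.map_apply hm hs,
    Measure.map_apply measurable_snd hs,
    Measure.compProd_apply (hm hs),
    Measure.compProd_apply (measurable_snd hs)]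
  congr 1
  funext y
  have : Prod.mk y ⁻¹' ((fun q : ℝ × (ℝ × ℝ) => q.2.1) ⁻¹' s) = s ×ˢ Set.univ := by
    ext z; simp [Set.mem_prod]
  rw [this, Kernel.prod_apply, Measure.prod_prod, measure_univ, mul_one]
  rfl

lemma theta_marg_snd (s : Set ℝ) (hs : MeasurableSet s) :
    (β ⊗ₘ (κ ×ₖ lam)).map (fun q => q.2.2) s = (β ⊗ₘ lam).map Prod.snd s := by
  have hm : Measurable fun q : ℝ × ℝ × ℝ => q.2.2 := measurable_snd.snd
  rw [Measure.map_apply hm hs,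
    Measure.map_apply measurable_snd hs,
    Measure.compProd_apply (hm hs),
    Measure.compProd_apply (measurable_snd hs)]
  congr 1
  funext y
  have : Prod.mk y ⁻¹' ((fun q : ℝ × (ℝ × ℝ) => q.2.2) ⁻¹' s) = Set.univ ×ˢ s := by
    ext z; simp [Set.mem_prod]
  rw [this, Kernel.prod_apply, Measure.prod_prod, measure_univ, one_mul]
  rfl

lemma theta_lintegral_fst {g : ℝ × ℝ → ℝ≥0∞} (hg : Measurable g) :
    ∫⁻ q, g (q.1, q.2.1) ∂(β ⊗ₘ (κ ×ₖ lam)) = ∫⁻ z, g z ∂(β ⊗ₘ κ) := by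
  have hm : Measurable fun q : ℝ × (ℝ × ℝ) => g (q.1, q.2.1) :=
    hg.comp (measurable_fst.prodMk measurable_snd.fst)
  rw [Measure.lintegral_compProd hm, Measure.lintegral_compProd hg]
  congr 1
  funext y
  rw [Kernel.prod_apply κ lam y]
  have he : ∫⁻ b : ℝ × ℝ, g ((y, b).1, (y, b).2.1) ∂((κ y).prod (lam y))
      = ∫⁻ b : ℝ × ℝ, g (y, b.1) ∂((κ y).prod (lam y)) := rfl
  have ham : AEMeasurable (fun b : ℝ × ℝ => g (y, b.1)) ((κ y).prod (lam y)) :=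
    (hg.comp (measurable_const.prodMk measurable_fst)).aemeasurable
  rw [he, lintegral_prod _ ham]
  simp [lintegral_const, measure_univ]

lemma theta_lintegral_snd {g : ℝ × ℝ → ℝ≥0∞} (hg : Measurable g) :
    ∫⁻ q, g (q.1, q.2.2) ∂(β ⊗ₘ (κ ×ₖ lam)) = ∫⁻ z, g z ∂(β ⊗ₘ lam) := by
  have hm : Measurable fun q : ℝ × (ℝ × ℝ) => g (q.1, q.2.2) :=
    hg.comp (measurable_fst.prodMk measurable_snd.snd)
  rw [Measure.lintegral_compProd hm, Measure.lintegral_compProd hg]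
  congr 1
  funext y
  rw [Kernel.prod_apply κ lam y]
  have he : ∫⁻ b : ℝ × ℝ, g ((y, b).1, (y, b).2.2) ∂((κ y).prod (lam y))
      = ∫⁻ b : ℝ × ℝ, g (y, b.2) ∂((κ y).prod (lam y)) := rfl
  have ham : AEMeasurable (fun b : ℝ × ℝ => g (y, b.2)) ((κ y).prod (lam y)) :=
    (hg.comp (measurable_const.prodMk measurable_snd)).aemeasurable
  rw [he, lintegral_prod _ ham]
  simp [lintegral_const, measure_univ]

end Glue

lemma glue (p : ℝ) (hp : 1 ≤ p) {α β δ : Measure ℝ}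
    [IsProbabilityMeasure α] [IsProbabilityMeasure β] [IsProbabilityMeasure δ]
    {γ1 γ2 : Measure (ℝ × ℝ)} (h1 : γ1 ∈ couplings α β) (h2 : γ2 ∈ couplings β δ) :
    ∃ η ∈ couplings α δ,
      wcost p η ^ (1/p) ≤ wcost p γ1 ^ (1/p) + wcost p γ2 ^ (1/p) := by
  obtain ⟨h1f, h1s⟩ := h1
  obtain ⟨h2f, h2s⟩ := h2
  have hγ1 : IsProbabilityMeasure γ1 := prob_of_coupling h1f
  have hγ2 : IsProbabilityMeasure γ2 := prob_of_coupling h2f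
  have hρ1prob : IsProbabilityMeasure (γ1.map Prod.swap) :=
    Measure.isProbabilityMeasure_map measurable_swap.aemeasurable
  have hρ1fst : (γ1.map Prod.swap).fst = β := by
    rw [Measure.fst, Measure.map_map measurable_fst measurable_swap]
    exact h1s
  have hγ2fst : γ2.fst = β := h2f
  set κ := (γ1.map Prod.swap).condKernel with hκ
  set lam := γ2.condKernel with hlam
  have hβκ : β ⊗ₘ κ = γ1.map Prod.swap := by
    conv_lhs => rw [← hρ1fst]
    exact Measure.disintegrate _ _
  have hβlam : β ⊗ₘ lam = γ2 := by
    conv_lhs => rw [← hγ2fst]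
    exact Measure.disintegrate _ _
  set θ : Measure (ℝ × (ℝ × ℝ)) := β ⊗ₘ (κ ×ₖ lam) with hθ
  refine ⟨θ.map Prod.snd, ⟨?_, ?_⟩, ?_⟩
  · -- first marginal is α
    rw [Measure.map_map measurable_fst measurable_snd]
    have : (Prod.fst ∘ Prod.snd : ℝ × ℝ × ℝ → ℝ) = fun q => q.2.1 := rfl
    rw [this]
    ext s hs
    rw [theta_marg_fst κ lam s hs, hβκ, Measure.map_map measurable_snd measurable_swap]
    have : (Prod.snd ∘ Prod.swap : ℝ × ℝ → ℝ) = Prod.fst := rfl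
    rw [this, h1f]
  · -- second marginal is δ
    rw [Measure.map_map measurable_snd measurable_snd]
    have : (Prod.snd ∘ Prod.snd : ℝ × ℝ × ℝ → ℝ) = fun q => q.2.2 := rfl
    rw [this]
    ext s hs
    rw [theta_marg_snd κ lam s hs, hβlam, h2s]
  · -- cost bound
    have hF := measurable_wcost_integrand p
    have hp0 : (0:ℝ) ≤ p := le_trans zero_le_one hp
    set G1 : ℝ × (ℝ × ℝ) → ℝ≥0∞ := fun q => ENNReal.ofReal |q.2.1 - q.1| with hG1
    set G2 : ℝ × (ℝ × ℝ) → ℝ≥0∞ := fun q => ENNReal.ofReal |q.1 - q.2.2| with hG2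
    have hG1m : Measurable G1 :=
      (measurable_snd.fst.sub measurable_fst).abs.ennreal_ofReal
    have hG2m : Measurable G2 :=
      (measurable_fst.sub measurable_snd.snd).abs.ennreal_ofReal
    have hcost : wcost p (θ.map Prod.snd) = ∫⁻ q, ENNReal.ofReal |q.2.1 - q.2.2| ^ p ∂θ := by
      rw [wcost, lintegral_map hF measurable_snd]
    have hmono : ∫⁻ q, ENNReal.ofReal |q.2.1 - q.2.2| ^ p ∂θ
        ≤ ∫⁻ q, (G1 q + G2 q) ^ p ∂θ := by
      apply lintegral_mono
      intro q
      apply ENNReal.rpow_le_rpow _ hp0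
      rw [hG1, hG2, ← ENNReal.ofReal_add (abs_nonneg _) (abs_nonneg _)]
      exact ENNReal.ofReal_le_ofReal (abs_sub_le _ _ _)
    have hmink : (∫⁻ q, (G1 q + G2 q) ^ p ∂θ) ^ (1/p)
        ≤ (∫⁻ q, G1 q ^ p ∂θ) ^ (1/p) + (∫⁻ q, G2 q ^ p ∂θ) ^ (1/p) :=
      ENNReal.lintegral_Lp_add_le hG1m.aemeasurable hG2m.aemeasurable hp
    have hI1 : ∫⁻ q, G1 q ^ p ∂θ = wcost p γ1 := by
      have : ∫⁻ q, G1 q ^ p ∂θ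
          = ∫⁻ q : ℝ × (ℝ × ℝ), (fun z : ℝ × ℝ => ENNReal.ofReal |z.2 - z.1| ^ p) (q.1, q.2.1) ∂θ := rfl
      have hgm : Measurable (fun z : ℝ × ℝ => ENNReal.ofReal |z.2 - z.1| ^ p) :=
        ENNReal.continuous_rpow_const.measurable.comp
          ((measurable_snd.sub measurable_fst).abs.ennreal_ofReal)
      rw [this, theta_lintegral_fst κ lam hgm, hβκ, lintegral_map hgm measurable_swap]
      rw [wcost]
      rfl
    have hI2 : ∫⁻ q, G2 q ^ p ∂θ = wcost p γ2 := by
      have : ∫⁻ q, G2 q ^ p ∂θ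
          = ∫⁻ q : ℝ × (ℝ × ℝ), (fun z : ℝ × ℝ => ENNReal.ofReal |z.1 - z.2| ^ p) (q.1, q.2.2) ∂θ := rfl
      rw [this, theta_lintegral_snd κ lam hF, hβlam, wcost]
    calc wcost p (θ.map Prod.snd) ^ (1/p)
        ≤ (∫⁻ q, (G1 q + G2 q) ^ p ∂θ) ^ (1/p) := by
          rw [hcost]; exact ENNReal.rpow_le_rpow hmono (by positivity)
      _ ≤ (∫⁻ q, G1 q ^ p ∂θ) ^ (1/p) + (∫⁻ q, G2 q ^ p ∂θ) ^ (1/p) := hmink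
      _ = wcost p γ1 ^ (1/p) + wcost p γ2 ^ (1/p) := by rw [hI1, hI2]

lemma W1dpp_triangle (p : ℝ) (hp : 1 ≤ p) (α β δ : Measure ℝ)
    [IsProbabilityMeasure α] [IsProbabilityMeasure β] [IsProbabilityMeasure δ] :
    W1dpp p α δ ^ (1/p) ≤ W1dpp p α β ^ (1/p) + W1dpp p β δ ^ (1/p) := by
  have hp' : (0:ℝ) < 1/p := by positivity
  have key : ∀ γ1 ∈ couplings α β, ∀ γ2 ∈ couplings β δ,
      W1dpp p α δ ^ (1/p) ≤ wcost p γ1 ^ (1/p) + wcost p γ2 ^ (1/p) := by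
    intro γ1 h1 γ2 h2
    obtain ⟨η, hη, hle⟩ := glue p hp h1 h2
    exact le_trans (ENNReal.rpow_le_rpow (W1dpp_le_wcost hη) hp'.le) hle
  rw [W1dpp_eq p α β, W1dpp_eq p β δ]
  rw [rpow_iInf _ hp', ENNReal.iInf_add]
  apply le_iInf; intro γ1
  rw [rpow_iInf _ hp', ENNReal.iInf_add]
  apply le_iInf; intro hγ1
  rw [rpow_iInf _ hp', ENNReal.add_iInf]
  apply le_iInf; intro γ2
  rw [rpow_iInf _ hp', ENNReal.add_iInf]
  apply le_iInf; intro hγ2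
  exact key γ1 hγ1 γ2 hγ2


-- ===== Part D: moments, bounds, measurability in A, and assembly =====

lemma measurable_tA (A : Mat d) : Measurable (tA (d := d) A) := by
  have h1 : Measurable fun M : SPD d => mlog M.1 :=
    measurable_mlog.comp measurable_subtype_coe
  have h2 : Measurable fun X : Mat d => (A * X).trace := by
    have he : (fun X : Mat d => (A * X).trace) = fun X => ∑ i, ∑ j, A i j * X j i := by
      funext X
      simp [Matrix.trace, Matrix.diag, Matrix.mul_apply]
    rw [he]
    refine Finset.measurable_sum _ (fun i _ => Finset.measurable_sum _ (fun j _ => ?_))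
    have hXj : Measurable fun X : Mat d => X j := measurable_pi_apply j
    have hXji : Measurable fun X : Mat d => X j i := (measurable_pi_apply i).comp hXj
    exact hXji.const_mul _
  exact h2.comp h1

def momf (X : SPD d) : ℝ≥0∞ := ENNReal.ofReal (fro (mlog X.1))

lemma measurable_momf : Measurable (momf (d := d)) :=
  (continuous_fro.measurable.comp (measurable_mlog.comp measurable_subtype_coe)).ennreal_ofReal

def mom (p : ℝ) (μ : Measure (SPD d)) : ℝ≥0∞ := ∫⁻ X, momf X ^ p ∂μ

lemma measurable_momf_pow (p : ℝ) : Measurable fun X : SPD d => momf X ^ p :=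
  ENNReal.continuous_rpow_const.measurable.comp measurable_momf

lemma ennreal_add_rpow_le {a b : ℝ≥0∞} {p : ℝ} (hp : 0 ≤ p) :
    (a + b) ^ p ≤ 2 ^ p * (a ^ p + b ^ p) := by
  have h1 : a + b ≤ 2 * (a ⊔ b) := by
    rw [two_mul]
    exact add_le_add le_sup_left le_sup_right
  have h2 : (a ⊔ b) ^ p ≤ a ^ p + b ^ p := by
    rcases le_total a b with h | h
    · rw [sup_eq_right.mpr h]; exact le_add_self
    · rw [sup_eq_left.mpr h]; exact self_le_add_right _ _
  calc (a + b) ^ p ≤ (2 * (a ⊔ b)) ^ p := ENNReal.rpow_le_rpow h1 hp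
    _ = 2 ^ p * (a ⊔ b) ^ p := ENNReal.mul_rpow_of_nonneg _ _ hp
    _ ≤ 2 ^ p * (a ^ p + b ^ p) := mul_le_mul_right h2 _

lemma measurable_dle_pow (p : ℝ) :
    Measurable fun X : SPD d => ENNReal.ofReal (dLE X.1 1) ^ p := by
  apply ENNReal.continuous_rpow_const.measurable.comp
  apply Measurable.ennreal_ofReal
  exact ((continuous_fro.comp (continuous_id.sub continuous_const)).measurable).comp
    (measurable_mlog.comp measurable_subtype_coe)

lemma mom_lt_top {p : ℝ} (hp : 1 ≤ p) {μ : Measure (SPD d)} (hμ : MemPp p μ) :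
    mom p μ < ⊤ := by
  haveI := hμ.1
  have hp0 : (0:ℝ) ≤ p := zero_le_one.trans hp
  set c1 : ℝ≥0∞ := ENNReal.ofReal (fro (mlog (1 : Mat d))) with hc1
  have hb : ∀ X : SPD d, momf X ^ p ≤ 2 ^ p * (ENNReal.ofReal (dLE X.1 1) ^ p + c1 ^ p) := by
    intro X
    refine le_trans (ENNReal.rpow_le_rpow ?_ hp0) (ennreal_add_rpow_le hp0)
    have h2 : fro (mlog X.1) ≤ dLE X.1 1 + fro (mlog (1 : Mat d)) := by
      have h3 := fro_sub_triangle (mlog X.1) (mlog (1 : Mat d)) 0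
      rw [sub_zero, sub_zero] at h3
      exact h3
    calc momf X = ENNReal.ofReal (fro (mlog X.1)) := rfl
      _ ≤ ENNReal.ofReal (dLE X.1 1 + fro (mlog (1 : Mat d))) := ENNReal.ofReal_le_ofReal h2
      _ = ENNReal.ofReal (dLE X.1 1) + c1 := ENNReal.ofReal_add (fro_nonneg _) (fro_nonneg _)
  have hmoment : ∫⁻ X, ENNReal.ofReal (dLE X.1 1) ^ p ∂μ < ⊤ := by
    have he : (fun X : SPD d => ENNReal.ofReal (dLE X.1 1) ^ p)
        = fun X => ENNReal.ofReal (dLE X.1 1 ^ p) := by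
      funext X
      exact ENNReal.ofReal_rpow_of_nonneg (fro_nonneg _) hp0
    rw [he]
    exact hμ.2
  calc mom p μ ≤ ∫⁻ X, 2 ^ p * (ENNReal.ofReal (dLE X.1 1) ^ p + c1 ^ p) ∂μ :=
        lintegral_mono hb
    _ = 2 ^ p * ((∫⁻ X, ENNReal.ofReal (dLE X.1 1) ^ p ∂μ) + c1 ^ p) := by
        rw [lintegral_const_mul _ (by exact (measurable_dle_pow p).add measurable_const :
            Measurable fun X : SPD d => ENNReal.ofReal (dLE X.1 1) ^ p + c1 ^ p),
          lintegral_add_right _ measurable_const, lintegral_const, measure_univ, mul_one]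
    _ < ⊤ := by
        apply ENNReal.mul_lt_top
        · exact ENNReal.rpow_lt_top_of_nonneg hp0 ENNReal.ofNat_ne_top
        · exact ENNReal.add_lt_top.mpr ⟨hmoment,
            ENNReal.rpow_lt_top_of_nonneg hp0 ENNReal.ofReal_ne_top⟩

lemma tA_pair_bound (A B : Mat d) (X : SPD d) :
    |tA A X - tA B X| ≤ fro (A - B) * fro (mlog X.1) := by
  have h : tA A X - tA B X = ((A - B) * mlog X.1).trace := by
    rw [Matrix.sub_mul, Matrix.trace_sub]
    rfl
  rw [h]
  exact abs_trace_mul_le _ _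

lemma tA_self_bound (A : Mat d) (X : SPD d) : |tA A X| ≤ fro A * fro (mlog X.1) :=
  abs_trace_mul_le _ _

lemma prob_map_tA (A : Mat d) (μ : Measure (SPD d)) [IsProbabilityMeasure μ] :
    IsProbabilityMeasure (μ.map (tA A)) :=
  Measure.isProbabilityMeasure_map (measurable_tA A).aemeasurable

lemma W1dpp_map_le {p : ℝ} (hp : 1 ≤ p) (A : Mat d) (μ ν : Measure (SPD d))
    [IsProbabilityMeasure μ] [IsProbabilityMeasure ν] :
    W1dpp p (μ.map (tA A)) (ν.map (tA A))
      ≤ ENNReal.ofReal (fro A) ^ p * (2 ^ p * (mom p μ + mom p ν)) := by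
  haveI := prob_map_tA A μ
  haveI := prob_map_tA A ν
  have hp0 : (0:ℝ) ≤ p := zero_le_one.trans hp
  have hpair : Measurable fun q : SPD d × SPD d => (tA A q.1, tA A q.2) :=
    ((measurable_tA A).comp measurable_fst).prodMk ((measurable_tA A).comp measurable_snd)
  have hmem : (μ.prod ν).map (fun q : SPD d × SPD d => (tA A q.1, tA A q.2))
      ∈ couplings (μ.map (tA A)) (ν.map (tA A)) := by
    constructor
    · rw [Measure.map_map measurable_fst hpair]
      have h1 : (Prod.fst ∘ fun q : SPD d × SPD d => (tA A q.1, tA A q.2))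
          = tA A ∘ Prod.fst := rfl
      rw [h1, ← Measure.map_map (measurable_tA A) measurable_fst]
      have h2 : (μ.prod ν).map Prod.fst = μ := by
        rw [← Measure.fst, Measure.fst_prod]
      rw [h2]
    · rw [Measure.map_map measurable_snd hpair]
      have h1 : (Prod.snd ∘ fun q : SPD d × SPD d => (tA A q.1, tA A q.2))
          = tA A ∘ Prod.snd := rfl
      rw [h1, ← Measure.map_map (measurable_tA A) measurable_snd]
      have h2 : (μ.prod ν).map Prod.snd = ν := by
        rw [← Measure.snd, Measure.snd_prod]
      rw [h2]
  refine (W1dpp_le_wcost hmem).trans ?_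
  rw [wcost, lintegral_map (measurable_wcost_integrand p) hpair]
  have hptw : ∀ q : SPD d × SPD d,
      ENNReal.ofReal |(tA A q.1, tA A q.2).1 - (tA A q.1, tA A q.2).2| ^ p
        ≤ ENNReal.ofReal (fro A) ^ p * (2 ^ p * (momf q.1 ^ p + momf q.2 ^ p)) := by
    intro q
    have habs : |tA A q.1 - tA A q.2| ≤ fro A * (fro (mlog q.1.1) + fro (mlog q.2.1)) := by
      have h1 := abs_sub_le (tA A q.1) 0 (tA A q.2)
      rw [sub_zero, zero_sub, abs_neg] at h1
      calc |tA A q.1 - tA A q.2| ≤ |tA A q.1| + |tA A q.2| := h1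
        _ ≤ fro A * fro (mlog q.1.1) + fro A * fro (mlog q.2.1) :=
            add_le_add (tA_self_bound A q.1) (tA_self_bound A q.2)
        _ = fro A * (fro (mlog q.1.1) + fro (mlog q.2.1)) := by ring
    calc ENNReal.ofReal |(tA A q.1, tA A q.2).1 - (tA A q.1, tA A q.2).2| ^ p
        ≤ (ENNReal.ofReal (fro A) * (momf q.1 + momf q.2)) ^ p := by
          apply ENNReal.rpow_le_rpow _ hp0
          calc ENNReal.ofReal |(tA A q.1, tA A q.2).1 - (tA A q.1, tA A q.2).2|
              ≤ ENNReal.ofReal (fro A * (fro (mlog q.1.1) + fro (mlog q.2.1))) :=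
                ENNReal.ofReal_le_ofReal habs
            _ = ENNReal.ofReal (fro A) * (momf q.1 + momf q.2) := by
                rw [ENNReal.ofReal_mul (fro_nonneg _),
                  ENNReal.ofReal_add (fro_nonneg _) (fro_nonneg _)]
                rfl
      _ = ENNReal.ofReal (fro A) ^ p * (momf q.1 + momf q.2) ^ p :=
          ENNReal.mul_rpow_of_nonneg _ _ hp0
      _ ≤ ENNReal.ofReal (fro A) ^ p * (2 ^ p * (momf q.1 ^ p + momf q.2 ^ p)) :=
          mul_le_mul_right (ennreal_add_rpow_le hp0) _
  refine (lintegral_mono hptw).trans ?_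
  have hmeas1 : Measurable fun q : SPD d × SPD d => momf q.1 ^ p :=
    (measurable_momf_pow p).comp measurable_fst
  have hmeas2 : Measurable fun q : SPD d × SPD d => momf q.2 ^ p :=
    (measurable_momf_pow p).comp measurable_snd
  rw [lintegral_const_mul _ (by exact (hmeas1.add hmeas2).const_mul _ :
      Measurable fun q : SPD d × SPD d => 2 ^ p * (momf q.1 ^ p + momf q.2 ^ p)),
    lintegral_const_mul _ (by exact hmeas1.add hmeas2 :
      Measurable fun q : SPD d × SPD d => momf q.1 ^ p + momf q.2 ^ p),
    lintegral_add_left hmeas1]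
  have hfst : ∫⁻ q : SPD d × SPD d, momf q.1 ^ p ∂(μ.prod ν) = mom p μ := by
    have h2 : (μ.prod ν).map Prod.fst = μ := by rw [← Measure.fst, Measure.fst_prod]
    have h3 : ∫⁻ q : SPD d × SPD d, momf q.1 ^ p ∂(μ.prod ν)
        = ∫⁻ x, momf x ^ p ∂((μ.prod ν).map Prod.fst) :=
      (lintegral_map (measurable_momf_pow p) measurable_fst).symm
    rw [h3, h2]
    rfl
  have hsnd : ∫⁻ q : SPD d × SPD d, momf q.2 ^ p ∂(μ.prod ν) = mom p ν := by
    have h2 : (μ.prod ν).map Prod.snd = ν := by rw [← Measure.snd, Measure.snd_prod]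
    have h3 : ∫⁻ q : SPD d × SPD d, momf q.2 ^ p ∂(μ.prod ν)
        = ∫⁻ x, momf x ^ p ∂((μ.prod ν).map Prod.snd) :=
      (lintegral_map (measurable_momf_pow p) measurable_snd).symm
    rw [h3, h2]
    rfl
  rw [hfst, hsnd]

lemma W1dpp_pair_le {p : ℝ} (hp : 1 ≤ p) (A B : Mat d) (μ : Measure (SPD d))
    [IsProbabilityMeasure μ] :
    W1dpp p (μ.map (tA A)) (μ.map (tA B)) ≤ ENNReal.ofReal (fro (A - B)) ^ p * mom p μ := by
  have hp0 : (0:ℝ) ≤ p := zero_le_one.trans hp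
  refine (W1dpp_le_map_pair μ (measurable_tA A) (measurable_tA B)).trans ?_
  calc ∫⁻ X, ENNReal.ofReal |tA A X - tA B X| ^ p ∂μ
      ≤ ∫⁻ X, ENNReal.ofReal (fro (A - B)) ^ p * momf X ^ p ∂μ := by
        apply lintegral_mono
        intro X
        show ENNReal.ofReal |tA A X - tA B X| ^ p
          ≤ ENNReal.ofReal (fro (A - B)) ^ p * momf X ^ p
        rw [← ENNReal.mul_rpow_of_nonneg _ _ hp0]
        simp only [momf]
        rw [← ENNReal.ofReal_mul (fro_nonneg _)]
        exact ENNReal.rpow_le_rpow (ENNReal.ofReal_le_ofReal (tA_pair_bound A B X)) hp0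
    _ = _ := by rw [lintegral_const_mul _ (measurable_momf_pow p), ← mom]

lemma rpow_p_one_div {p : ℝ} (hp0 : (0:ℝ) < p) (x : ℝ≥0∞) : (x ^ p) ^ (1/p) = x := by
  rw [← ENNReal.rpow_mul, mul_one_div_cancel hp0.ne', ENNReal.rpow_one]

lemma rpow_one_div_p {p : ℝ} (hp0 : (0:ℝ) < p) (x : ℝ≥0∞) : (x ^ (1/p)) ^ p = x := by
  rw [← ENNReal.rpow_mul, one_div_mul_cancel hp0.ne', ENNReal.rpow_one]

lemma measurable_phi {p : ℝ} (hp : 1 ≤ p) {μ ν : Measure (SPD d)}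
    (hμ : MemPp p μ) (hν : MemPp p ν) :
    Measurable fun A : Mat d => W1dpp p (μ.map (tA A)) (ν.map (tA A)) ^ (1/p) := by
  haveI := hμ.1
  haveI := hν.1
  have hp0 : (0:ℝ) < p := lt_of_lt_of_le one_pos hp
  have hp0' : (0:ℝ) < 1/p := by positivity
  set K : ℝ≥0∞ := mom p μ ^ (1/p) + mom p ν ^ (1/p) with hK
  have hKtop : K ≠ ⊤ :=
    ENNReal.add_ne_top.mpr
      ⟨ENNReal.rpow_ne_top_of_nonneg hp0'.le (mom_lt_top hp hμ).ne,
       ENNReal.rpow_ne_top_of_nonneg hp0'.le (mom_lt_top hp hν).ne⟩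
  set φ : Mat d → ℝ≥0∞ := fun A => W1dpp p (μ.map (tA A)) (ν.map (tA A)) ^ (1/p) with hφ
  have hfin : ∀ A, φ A ≠ ⊤ := by
    intro A
    apply ENNReal.rpow_ne_top_of_nonneg hp0'.le
    refine ((W1dpp_map_le hp A μ ν).trans_lt ?_).ne
    apply ENNReal.mul_lt_top
    · exact ENNReal.rpow_lt_top_of_nonneg (zero_le_one.trans hp) ENNReal.ofReal_ne_top
    · apply ENNReal.mul_lt_top
      · exact ENNReal.rpow_lt_top_of_nonneg (zero_le_one.trans hp) ENNReal.ofNat_ne_top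
      · exact ENNReal.add_lt_top.mpr ⟨mom_lt_top hp hμ, mom_lt_top hp hν⟩
  have hstep : ∀ A B : Mat d, φ A ≤ φ B + ENNReal.ofReal (fro (A - B)) * K := by
    intro A B
    haveI := prob_map_tA A μ
    haveI := prob_map_tA B μ
    haveI := prob_map_tA A ν
    haveI := prob_map_tA B ν
    have t1 : φ A ≤ W1dpp p (μ.map (tA A)) (μ.map (tA B)) ^ (1/p)
        + W1dpp p (μ.map (tA B)) (ν.map (tA A)) ^ (1/p) :=
      W1dpp_triangle p hp _ _ _
    have t2 : W1dpp p (μ.map (tA B)) (ν.map (tA A)) ^ (1/p)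
        ≤ W1dpp p (μ.map (tA B)) (ν.map (tA B)) ^ (1/p)
          + W1dpp p (ν.map (tA B)) (ν.map (tA A)) ^ (1/p) :=
      W1dpp_triangle p hp _ _ _
    have b1 : W1dpp p (μ.map (tA A)) (μ.map (tA B)) ^ (1/p)
        ≤ ENNReal.ofReal (fro (A - B)) * mom p μ ^ (1/p) := by
      refine le_trans (ENNReal.rpow_le_rpow (W1dpp_pair_le hp A B μ) hp0'.le) ?_
      rw [ENNReal.mul_rpow_of_nonneg _ _ hp0'.le, rpow_p_one_div hp0]
    have b2 : W1dpp p (ν.map (tA B)) (ν.map (tA A)) ^ (1/p)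
        ≤ ENNReal.ofReal (fro (A - B)) * mom p ν ^ (1/p) := by
      refine le_trans (ENNReal.rpow_le_rpow (W1dpp_pair_le hp B A ν) hp0'.le) ?_
      rw [ENNReal.mul_rpow_of_nonneg _ _ hp0'.le, rpow_p_one_div hp0, fro_sub_comm]
    calc φ A ≤ W1dpp p (μ.map (tA A)) (μ.map (tA B)) ^ (1/p)
        + W1dpp p (μ.map (tA B)) (ν.map (tA A)) ^ (1/p) := t1
      _ ≤ ENNReal.ofReal (fro (A - B)) * mom p μ ^ (1/p)
          + (W1dpp p (μ.map (tA B)) (ν.map (tA B)) ^ (1/p)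
            + ENNReal.ofReal (fro (A - B)) * mom p ν ^ (1/p)) :=
          add_le_add b1 (t2.trans (add_le_add_right b2 _))
      _ = φ B + ENNReal.ofReal (fro (A - B)) * K := by
          rw [hK, mul_add]
          ring
  set f : Mat d → ℝ := fun A => (φ A).toReal with hf
  have hfle : ∀ A B : Mat d, f A - f B ≤ fro (A - B) * K.toReal := by
    intro A B
    have hmultop : ENNReal.ofReal (fro (A - B)) * K ≠ ⊤ :=
      ENNReal.mul_ne_top ENNReal.ofReal_ne_top hKtop
    have h1 : f A ≤ f B + fro (A - B) * K.toReal := by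
      calc f A ≤ (φ B + ENNReal.ofReal (fro (A - B)) * K).toReal :=
            ENNReal.toReal_mono (ENNReal.add_ne_top.mpr ⟨hfin B, hmultop⟩) (hstep A B)
        _ = f B + fro (A - B) * K.toReal := by
            rw [ENNReal.toReal_add (hfin B) hmultop, ENNReal.toReal_mul,
              ENNReal.toReal_ofReal (fro_nonneg _)]
    linarith
  have hcont : Continuous f := by
    rw [continuous_iff_continuousAt]
    intro B
    have habs : ∀ A, |f A - f B| ≤ fro (A - B) * K.toReal := by
      intro A
      apply abs_le.mpr
      constructor
      · have h2 := hfle B A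
        rw [fro_sub_comm B A] at h2
        linarith
      · exact hfle A B
    have h0 : Filter.Tendsto (fun A => f A - f B) (nhds B) (nhds 0) := by
      apply squeeze_zero_norm (fun A => by simpa [Real.norm_eq_abs] using habs A)
      have h1 := (tendsto_fro_sub B).mul_const K.toReal
      simpa using h1
    have h2 : Filter.Tendsto f (nhds B) (nhds (f B)) := by
      have h3 := h0.add_const (f B)
      simpa using h3
    exact h2
  have heq : φ = fun A => ENNReal.ofReal (f A) := by
    funext A
    exact (ENNReal.ofReal_toReal (hfin A)).symm
  have : Measurable φ := by
    rw [heq]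
    exact hcont.measurable.ennreal_ofReal
  exact this


/-- `SPDSW_p` is finite, nonnegative, symmetric, and satisfies the
triangle inequality on `P_p(S_d^{++}(ℝ))`. -/
theorem stmt4 (d : ℕ) (hd : 1 ≤ d) (p : ℝ) (hp : 1 ≤ p)
    (lamS : Measure (Mat d)) (hlamS : IsUniformSymSphere lamS)
    (μ ν α : Measure (SPD d)) (hμ : MemPp p μ) (hν : MemPp p ν) (hα : MemPp p α) :
    SPDSW p lamS μ ν ≠ ⊤ ∧
    0 ≤ SPDSW p lamS μ ν ∧
    SPDSW p lamS μ ν = SPDSW p lamS ν μ ∧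
    SPDSW p lamS μ ν ≤ SPDSW p lamS μ α + SPDSW p lamS α ν := by
  haveI := hμ.1
  haveI := hν.1
  haveI := hα.1
  haveI := hlamS.1
  have hp0 : (0:ℝ) < p := lt_of_lt_of_le one_pos hp
  have hp0' : (0:ℝ) < 1/p := by positivity
  refine ⟨?_, zero_le, ?_, ?_⟩
  · -- finiteness
    have hC : SPDSWpp p lamS μ ν ≤ 2 ^ p * (mom p μ + mom p ν) := by
      have hae : ∀ᵐ A ∂lamS, W1dpp p (μ.map (tA A)) (ν.map (tA A))
          ≤ 2 ^ p * (mom p μ + mom p ν) := by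
        rw [MeasureTheory.ae_iff]
        apply measure_mono_null _ hlamS.2.1
        intro A hA
        simp only [Set.mem_setOf_eq, Set.mem_compl_iff] at hA ⊢
        intro hAs
        apply hA
        have h1 := W1dpp_map_le hp A μ ν
        rw [hAs.2] at h1
        simpa using h1
      calc SPDSWpp p lamS μ ν ≤ ∫⁻ _, 2 ^ p * (mom p μ + mom p ν) ∂lamS :=
            lintegral_mono_ae hae
        _ = 2 ^ p * (mom p μ + mom p ν) := by
            rw [lintegral_const, measure_univ, mul_one]
    have hfin : SPDSWpp p lamS μ ν ≠ ⊤ := by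
      refine (hC.trans_lt ?_).ne
      apply ENNReal.mul_lt_top
      · exact ENNReal.rpow_lt_top_of_nonneg hp0.le ENNReal.ofNat_ne_top
      · exact ENNReal.add_lt_top.mpr ⟨mom_lt_top hp hμ, mom_lt_top hp hν⟩
    exact ENNReal.rpow_ne_top_of_nonneg hp0'.le hfin
  · -- symmetry
    unfold SPDSW SPDSWpp
    congr 1
    apply lintegral_congr
    intro A
    exact W1dpp_symm p _ _
  · -- triangle
    set φ1 : Mat d → ℝ≥0∞ := fun A => W1dpp p (μ.map (tA A)) (α.map (tA A)) ^ (1/p) with hφ1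
    set φ2 : Mat d → ℝ≥0∞ := fun A => W1dpp p (α.map (tA A)) (ν.map (tA A)) ^ (1/p) with hφ2
    have hφ1m : Measurable φ1 := measurable_phi hp hμ hα
    have hφ2m : Measurable φ2 := measurable_phi hp hα hν
    have hpoint : ∀ A : Mat d, W1dpp p (μ.map (tA A)) (ν.map (tA A)) ≤ (φ1 A + φ2 A) ^ p := by
      intro A
      haveI := prob_map_tA A μ
      haveI := prob_map_tA A ν
      haveI := prob_map_tA A α
      have h1 : W1dpp p (μ.map (tA A)) (ν.map (tA A)) ^ (1/p) ≤ φ1 A + φ2 A :=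
        W1dpp_triangle p hp _ _ _
      calc W1dpp p (μ.map (tA A)) (ν.map (tA A))
          = (W1dpp p (μ.map (tA A)) (ν.map (tA A)) ^ (1/p)) ^ p := (rpow_one_div_p hp0 _).symm
        _ ≤ (φ1 A + φ2 A) ^ p := ENNReal.rpow_le_rpow h1 hp0.le
    have hmink : (∫⁻ A, (φ1 A + φ2 A) ^ p ∂lamS) ^ (1/p)
        ≤ (∫⁻ A, φ1 A ^ p ∂lamS) ^ (1/p) + (∫⁻ A, φ2 A ^ p ∂lamS) ^ (1/p) :=
      ENNReal.lintegral_Lp_add_le hφ1m.aemeasurable hφ2m.aemeasurable hp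
    have hid1 : ∫⁻ A, φ1 A ^ p ∂lamS = SPDSWpp p lamS μ α := by
      apply lintegral_congr
      intro A
      exact rpow_one_div_p hp0 _
    have hid2 : ∫⁻ A, φ2 A ^ p ∂lamS = SPDSWpp p lamS α ν := by
      apply lintegral_congr
      intro A
      exact rpow_one_div_p hp0 _
    calc SPDSW p lamS μ ν = SPDSWpp p lamS μ ν ^ (1/p) := rfl
      _ ≤ (∫⁻ A, (φ1 A + φ2 A) ^ p ∂lamS) ^ (1/p) :=
          ENNReal.rpow_le_rpow (lintegral_mono hpoint) hp0'.le
      _ ≤ (∫⁻ A, φ1 A ^ p ∂lamS) ^ (1/p) + (∫⁻ A, φ2 A ^ p ∂lamS) ^ (1/p) := hmink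
      _ = SPDSW p lamS μ α + SPDSW p lamS α ν := by rw [hid1, hid2]; rfl

end
end

section
/- Let d ≥ 1, p ≥ 1, and let λ be the uniform probability measure on the unit sphere S^{d−1} = {θ ∈ ℝ^d : ‖θ‖_2 = 1}. Then for every S ∈ S_d(ℝ), ∫_{S^{d−1}} |⟨diag(θ), S⟩_F|^p dλ(θ) = (1/d) · (Σ_{i=1}^d S_{ii}²)^{p/2} · ∫_{S^{d−1}} ‖θ‖_p^p dλ(θ), where ⟨diag(θ), S⟩_F = Σ_{i=1}^d θ_i S_{ii} and ‖θ‖_p^p = Σ_{i=1}^d |θ_i|^p. -/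
open MeasureTheory Matrix Filter
open scoped ENNReal NNReal

noncomputable section

variable {d : ℕ}

/-- The uniform (rotation-invariant normalized surface) probability measure on the unit
sphere `S^{d-1} ⊆ ℝ^d`: characterized as a Borel probability measure concentrated on the
sphere and invariant under every linear isometry of `ℝ^d`. -/
def IsUniformSphere {d : ℕ} (lam : Measure (EuclideanSpace ℝ (Fin d))) : Prop :=
  IsProbabilityMeasure lam ∧
  lam (Metric.sphere (0 : EuclideanSpace ℝ (Fin d)) 1)ᶜ = 0 ∧
  ∀ f : EuclideanSpace ℝ (Fin d) ≃ₗᵢ[ℝ] EuclideanSpace ℝ (Fin d), lam.map f = lam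

/-- Invariance: integrating a continuous function against an isometry-invariant measure. -/
lemma aux_key {d : ℕ} (p : ℝ) (hp : 1 ≤ p) (lam : Measure (EuclideanSpace ℝ (Fin d)))
    (hinv : ∀ f : EuclideanSpace ℝ (Fin d) ≃ₗᵢ[ℝ] EuclideanSpace ℝ (Fin d), lam.map f = lam)
    (u : EuclideanSpace ℝ (Fin d)) (hu : ‖u‖ = 1) (i : Fin d) :
    ∫ θ, |θ i| ^ p ∂lam = ∫ θ, |(inner ℝ θ u : ℝ)| ^ p ∂lam := by
  set w : EuclideanSpace ℝ (Fin d) := EuclideanSpace.single i (1:ℝ) with hw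
  set f : EuclideanSpace ℝ (Fin d) ≃ₗᵢ[ℝ] EuclideanSpace ℝ (Fin d) :=
    Submodule.reflection (ℝ ∙ (u - w))ᗮ with hf
  have hfu : f u = w := Submodule.reflection_sub (by simp [hw, hu])
  have hcont : Continuous fun θ : EuclideanSpace ℝ (Fin d) => |(inner ℝ θ w : ℝ)| ^ p := by
    apply Continuous.rpow_const
    · exact (continuous_id.inner continuous_const).abs
    · intro x; exact Or.inr (by linarith)
  have h1 : ∫ θ, |(inner ℝ θ w : ℝ)| ^ p ∂lam
      = ∫ θ, |(inner ℝ (f θ) w : ℝ)| ^ p ∂lam := by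
    conv_lhs => rw [← hinv f]
    rw [integral_map f.continuous.measurable.aemeasurable hcont.aestronglyMeasurable]
  have h2 : ∀ θ : EuclideanSpace ℝ (Fin d), (inner ℝ θ w : ℝ) = θ i := by
    intro θ; rw [hw, EuclideanSpace.inner_single_right]; simp
  have h3 : ∀ θ : EuclideanSpace ℝ (Fin d), (inner ℝ (f θ) w : ℝ) = inner ℝ θ u := by
    intro θ; rw [← hfu, LinearIsometryEquiv.inner_map_map]
  calc ∫ θ, |θ i| ^ p ∂lam = ∫ θ, |(inner ℝ θ w : ℝ)| ^ p ∂lam := by simp_rw [h2]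
    _ = ∫ θ, |(inner ℝ (f θ) w : ℝ)| ^ p ∂lam := h1
    _ = ∫ θ, |(inner ℝ θ u : ℝ)| ^ p ∂lam := by simp_rw [h3]

lemma aux_integrable {d : ℕ} (p : ℝ) (hp : 1 ≤ p) (lam : Measure (EuclideanSpace ℝ (Fin d)))
    [IsProbabilityMeasure lam]
    (hsph : lam (Metric.sphere (0 : EuclideanSpace ℝ (Fin d)) 1)ᶜ = 0)
    (u : EuclideanSpace ℝ (Fin d)) (hu : ‖u‖ = 1) :
    Integrable (fun θ => |(inner ℝ θ u : ℝ)| ^ p) lam := by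
  have hcont : Continuous fun θ : EuclideanSpace ℝ (Fin d) => |(inner ℝ θ u : ℝ)| ^ p := by
    apply Continuous.rpow_const
    · exact (continuous_id.inner continuous_const).abs
    · intro x; exact Or.inr (by linarith)
  have hae : ∀ᵐ θ ∂lam, θ ∈ Metric.sphere (0 : EuclideanSpace ℝ (Fin d)) 1 := by
    have : {θ : EuclideanSpace ℝ (Fin d) | ¬ θ ∈ Metric.sphere (0 : EuclideanSpace ℝ (Fin d)) 1}
        = (Metric.sphere (0 : EuclideanSpace ℝ (Fin d)) 1)ᶜ := rfl
    rw [ae_iff, this, hsph]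
  refine (integrable_const (1:ℝ)).mono' hcont.aestronglyMeasurable ?_
  filter_upwards [hae] with θ hθ
  have hn : ‖θ‖ = 1 := by simpa using hθ
  have h1 : |(inner ℝ θ u : ℝ)| ≤ 1 := by
    calc |(inner ℝ θ u : ℝ)| ≤ ‖θ‖ * ‖u‖ := abs_real_inner_le_norm θ u
      _ = 1 := by rw [hn, hu]; ring
  have h0 : (0:ℝ) ≤ |(inner ℝ θ u : ℝ)| ^ p := Real.rpow_nonneg (abs_nonneg _) p
  rw [Real.norm_eq_abs, abs_of_nonneg h0]
  calc |(inner ℝ θ u : ℝ)| ^ p ≤ 1 ^ p :=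
        Real.rpow_le_rpow (abs_nonneg _) h1 (by linarith)
    _ = 1 := Real.one_rpow p

/-- For every symmetric `S`,
`∫_{S^{d−1}} |⟨diag(θ), S⟩_F|^p dλ(θ) = (1/d)·(Σ_i S_ii²)^{p/2}·∫_{S^{d−1}} ‖θ‖_p^p dλ(θ)`. -/
theorem stmt14 (d : ℕ) (hd : 1 ≤ d) (p : ℝ) (hp : 1 ≤ p)
    (lam : Measure (EuclideanSpace ℝ (Fin d))) (hlam : IsUniformSphere lam)
    (S : Mat d) (hS : S.IsSymm) :
    ∫ θ, |∑ i, θ i * S i i| ^ p ∂lam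
      = (1 / d : ℝ) * (∑ i, S i i ^ 2) ^ (p / 2) * ∫ θ, (∑ i, |θ i| ^ p) ∂lam := by

  obtain ⟨hprob, hsph, hinv⟩ := hlam
  haveI := hprob
  have hp0 : p ≠ 0 := by linarith
  set t : ℝ := ∑ i, S i i ^ 2 with ht
  have ht0 : 0 ≤ t := Finset.sum_nonneg fun i _ => sq_nonneg _
  -- integrability of coordinate functions
  have hint : ∀ i : Fin d, Integrable (fun θ : EuclideanSpace ℝ (Fin d) => |θ i| ^ p) lam := by
    intro i
    have h2 : ∀ θ : EuclideanSpace ℝ (Fin d),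
        (inner ℝ θ (EuclideanSpace.single i (1:ℝ)) : ℝ) = θ i := by
      intro θ; rw [EuclideanSpace.inner_single_right]; simp
    have := aux_integrable p hp lam hsph (EuclideanSpace.single i (1:ℝ)) (by simp)
    simpa only [h2] using this
  by_cases hz : t = 0
  · have hall : ∀ i, S i i = 0 := by
      intro i
      have h := (Finset.sum_eq_zero_iff_of_nonneg
        (fun i _ => sq_nonneg (S i i))).mp hz i (Finset.mem_univ i)
      exact pow_eq_zero_iff two_ne_zero |>.mp h
    rw [hz, Real.zero_rpow (by positivity : p / 2 ≠ 0)]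
    simp only [hall, mul_zero, Finset.sum_const_zero, abs_zero, Real.zero_rpow hp0,
      integral_zero, mul_zero, zero_mul]
  · -- the diagonal vector
    set v : EuclideanSpace ℝ (Fin d) := WithLp.toLp 2 (fun i => S i i : Fin d → ℝ) with hv
    have hvne : v ≠ 0 := by
      intro h
      apply hz
      rw [ht]
      refine Finset.sum_eq_zero fun i _ => ?_
      have : v i = 0 := by rw [h]; rfl
      rw [hv] at this; simp only at this; rw [this]; ring
    have hc : 0 < ‖v‖ := norm_pos_iff.mpr hvne
    set u : EuclideanSpace ℝ (Fin d) := ‖v‖⁻¹ • v with hu'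
    have hu : ‖u‖ = 1 := norm_smul_inv_norm hvne
    have hvu : v = ‖v‖ • u := by
      rw [hu', smul_smul, mul_inv_cancel₀ hc.ne', one_smul]
    have hinner : ∀ θ : EuclideanSpace ℝ (Fin d),
        ∑ i, θ i * S i i = ‖v‖ * (inner ℝ θ u : ℝ) := by
      intro θ
      have h1 : (inner ℝ θ v : ℝ) = ∑ i, θ i * S i i := by
        rw [PiLp.inner_apply]; simp [hv, mul_comm]
      have h2 : (inner ℝ θ u : ℝ) = ‖v‖⁻¹ * (inner ℝ θ v : ℝ) := by
        rw [hu', real_inner_smul_right]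
      rw [← h1, h2]
      field_simp
    have hnv : ‖v‖ = Real.sqrt t := by
      rw [EuclideanSpace.norm_eq, ht]
      congr 1
      refine Finset.sum_congr rfl fun i _ => ?_
      simp [hv, Real.norm_eq_abs, sq_abs]
    have hnp : ‖v‖ ^ p = t ^ (p / 2) := by
      rw [hnv, Real.sqrt_eq_rpow, ← Real.rpow_mul ht0]
      congr 1; ring
    set I : ℝ := ∫ θ, |(inner ℝ θ u : ℝ)| ^ p ∂lam with hI
    have hL : ∫ θ, |∑ i, θ i * S i i| ^ p ∂lam = t ^ (p / 2) * I := by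
      have : ∀ θ : EuclideanSpace ℝ (Fin d),
          |∑ i, θ i * S i i| ^ p = t ^ (p / 2) * |(inner ℝ θ u : ℝ)| ^ p := by
        intro θ
        rw [hinner θ, abs_mul, abs_of_nonneg (norm_nonneg v),
          Real.mul_rpow (norm_nonneg v) (abs_nonneg _), hnp]
      simp_rw [this]
      rw [integral_const_mul]
    have hR : ∫ θ, (∑ i, |θ i| ^ p) ∂lam = d * I := by
      rw [integral_finset_sum _ fun i _ => hint i]
      have : ∀ i ∈ Finset.univ, ∫ θ, |θ i| ^ p ∂lam = I :=
        fun i _ => aux_key p hp lam hinv u hu i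
      rw [Finset.sum_congr rfl this, Finset.sum_const, Finset.card_univ,
        Fintype.card_fin, nsmul_eq_mul]
    rw [hL, hR]
    have hd0 : (d : ℝ) ≠ 0 := Nat.cast_ne_zero.mpr (by omega)
    field_simp

end
end
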